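/- Let γ ∈ ℂ \ {0} and let A be a complex symmetric n×n matrix. Define the linear map κ_q : ℂ²ⁿ → ℂ²ⁿ by κ_q(y,η) = (y/γ − 8iγAη, γη), and let Λ₀ := {(y, ȳ/(2i)) : y ∈ ℂⁿ} ⊂ ℂ²ⁿ. Then κ_q(Λ₀) ∩ Λ₀ = { (y, ȳ/(2i)) : y ∈ ℂⁿ, (1−|γ|²) y = 4|γ|² A ȳ }. -/

import Mathlib

open Matrix Complex

noncomputable section

namespace BergerCoburn

variable {n : ℕ}

/-- the intersection computation (6.8)–(6.10) of the paper.  For `γ ≠ 0`,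
`A` complex symmetric, `κ_q(y,η) = (y/γ - 8iγAη, γη)` and
`Λ₀ = {(y, ȳ/(2i))}`, one has
`κ_q(Λ₀) ∩ Λ₀ = {(y, ȳ/(2i)) : (1-|γ|²)y = 4|γ|² A ȳ}`. -/
theorem statement15
    (γ : ℂ) (hγ : γ ≠ 0)
    (A : Matrix (Fin n) (Fin n) ℂ) (hA : A.IsSymm)
    (κq : (Fin n → ℂ) × (Fin n → ℂ) → (Fin n → ℂ) × (Fin n → ℂ))
    (hκq : ∀ y η : Fin n → ℂ,
      κq (y, η) = (γ⁻¹ • y - (8 * Complex.I * γ) • A.mulVec η, γ • η))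
    (Λ₀ : Set ((Fin n → ℂ) × (Fin n → ℂ)))
    (hΛ₀ : Λ₀ = {p | ∃ y : Fin n → ℂ, p = (y, (2 * Complex.I)⁻¹ • star y)}) :
    (κq '' Λ₀) ∩ Λ₀ =
      {p | ∃ y : Fin n → ℂ,
        ((1 : ℂ) - ((‖γ‖ : ℂ)) ^ 2) • y
            = ((4 : ℂ) * ((‖γ‖ : ℂ)) ^ 2) • A.mulVec (star y) ∧
        p = (y, (2 * Complex.I)⁻¹ • star y)} := by
  have h2i : (2 * Complex.I : ℂ) ≠ 0 := by
    simp [Complex.I_ne_zero]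
  have habs : ((‖γ‖ : ℂ)) ^ 2 = γ * star γ := by
    rw [← Complex.ofReal_pow, Complex.sq_norm, ← Complex.mul_conj]
    rfl
  have hinv : γ * γ⁻¹ = 1 := mul_inv_cancel₀ hγ
  have hI : Complex.I ≠ 0 := Complex.I_ne_zero
  ext p
  simp only [Set.mem_inter_iff, Set.mem_image, hΛ₀, Set.mem_setOf_eq]
  constructor
  · rintro ⟨⟨q, ⟨u, rfl⟩, hq⟩, ⟨w, rfl⟩⟩
    rw [hκq] at hq
    simp only [Prod.mk.injEq] at hq
    obtain ⟨hq1, hq2⟩ := hq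
    -- second components: star w = γ • star u
    have hsw : star w = γ • star u := by
      apply smul_right_injective (Fin n → ℂ) (inv_ne_zero h2i)
      show (2 * Complex.I)⁻¹ • star w = (2 * Complex.I)⁻¹ • (γ • star u)
      rw [← hq2, smul_comm]
    have hwu : w = star γ • u := by
      rw [← star_star w, hsw, star_smul, star_star]
    refine ⟨w, ?_, rfl⟩
    -- rewrite hq1 into nice form
    rw [Matrix.mulVec_smul, smul_smul] at hq1
    rw [habs, hsw, Matrix.mulVec_smul, hwu]
    funext i
    have h1 := congrFun hq1 i
    have hwi := congrFun hwu i
    simp only [Pi.smul_apply, Pi.sub_apply, smul_eq_mul] at h1 hwi ⊢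
    have h8 : (8 * Complex.I * γ * (2 * Complex.I)⁻¹ : ℂ) = 4 * γ := by
      field_simp
      ring
    rw [h8] at h1
    linear_combination (γ * star γ) * h1 - (star γ * u i) * hinv + (γ * star γ) * hwi
  · rintro ⟨w, hcond, rfl⟩
    refine ⟨⟨((star γ)⁻¹ • w, (2 * Complex.I)⁻¹ • star ((star γ)⁻¹ • w)),
      ⟨(star γ)⁻¹ • w, rfl⟩, ?_⟩, ⟨w, rfl⟩⟩
    rw [hκq]
    have hsu : star ((star γ)⁻¹ • w) = γ⁻¹ • star w := by
      rw [star_smul, star_inv₀, star_star]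
    simp only [Prod.mk.injEq]
    constructor
    · rw [hsu, Matrix.mulVec_smul, Matrix.mulVec_smul, smul_smul, smul_smul, smul_smul]
      rw [habs] at hcond
      funext i
      have h1 := congrFun hcond i
      simp only [Pi.smul_apply, Pi.sub_apply, smul_eq_mul] at h1 ⊢
      have hsγ : ((starRingEnd ℂ) γ : ℂ) ≠ 0 := by
        simpa using star_ne_zero.mpr hγ
      rw [Complex.star_def] at h1 ⊢
      field_simp
      linear_combination 2 * h1
    · rw [hsu]
      match_scalars
      field_simp

end BergerCoburn
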